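/- The derivative Λ'(a) of the implicit function Λ tends to +∞ as a → 1⁻. -/

import Mathlib

/-- `F(λ,a) = λ log λ + (1-λ) log(1-λ) - λ log a - (1-λ) log(1-a)`, with `0 log 0 = 0`. -/
noncomputable def F (l a : ℝ) : ℝ :=
  l * Real.log l + (1 - l) * Real.log (1 - l) - l * Real.log a - (1 - l) * Real.log (1 - a)

open Real Set Filter

lemma continuous_F_left (a : ℝ) : Continuous fun l => F l a := by
  have h1 : Continuous fun l : ℝ => l * Real.log l := Real.continuous_mul_log
  have h2 : Continuous fun l : ℝ => (1 - l) * Real.log (1 - l) :=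
    h1.comp (continuous_const.sub continuous_id)
  exact ((h1.add h2).sub (continuous_id.mul continuous_const)).sub
    ((continuous_const.sub continuous_id).mul continuous_const)

lemma hasDerivAt_F_left {l a : ℝ} (hl0 : 0 < l) (hl1 : l < 1) :
    HasDerivAt (fun x => F x a)
      (Real.log l - Real.log (1 - l) - Real.log a + Real.log (1 - a)) l := by
  have h1 : HasDerivAt (fun x : ℝ => x * Real.log x) (Real.log l + 1) l :=
    Real.hasDerivAt_mul_log hl0.ne'
  have h2 : HasDerivAt (fun x : ℝ => (1 - x) * Real.log (1 - x))
      (-(Real.log (1 - l) + 1)) l := by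
    have := (Real.hasDerivAt_mul_log (x := 1 - l) (by linarith)).comp l
      ((hasDerivAt_id l).const_sub 1)
    simpa [Function.comp_def] using this.congr_deriv (by ring)
  have h3 : HasDerivAt (fun x : ℝ => x * Real.log a) (Real.log a) l :=
    ((hasDerivAt_id l).mul_const _).congr_deriv (by ring)
  have h4 : HasDerivAt (fun x : ℝ => (1 - x) * Real.log (1 - a)) (-Real.log (1 - a)) l :=
    (((hasDerivAt_id l).const_sub 1).mul_const _).congr_deriv (by ring)
  exact (((h1.add h2).sub h3).sub h4).congr_deriv (by ring)

lemma hasDerivAt_F_right {l a : ℝ} (ha0 : 0 < a) (ha1 : a < 1) :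
    HasDerivAt (fun y => F l y) ((1 - l) / (1 - a) - l / a) a := by
  have h3 : HasDerivAt (fun y : ℝ => l * Real.log y) (l / a) a := by
    simpa [div_eq_mul_inv] using (Real.hasDerivAt_log ha0.ne').const_mul l
  have h4 : HasDerivAt (fun y : ℝ => (1 - l) * Real.log (1 - y))
      (-((1 - l) / (1 - a))) a := by
    have hlog : HasDerivAt (fun y : ℝ => Real.log (1 - y)) (-(1 - a)⁻¹) a := by
      have := (Real.hasDerivAt_log (x := 1 - a) (by linarith)).comp a
        ((hasDerivAt_id a).const_sub 1)
      simpa [Function.comp_def] using this.congr_deriv (by ring)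
    simpa [div_eq_mul_inv] using (hlog.const_mul (1 - l)).congr_deriv (by ring)
  have h12 : HasDerivAt (fun y : ℝ =>
      l * Real.log l + (1 - l) * Real.log (1 - l) : ℝ → ℝ) 0 a := hasDerivAt_const _ _
  have := ((h12.sub h3).sub h4).congr_deriv
    (show (0 : ℝ) - l / a - -((1 - l) / (1 - a)) = (1 - l) / (1 - a) - l / a by ring)
  exact this

lemma F_strictAntiOn {a : ℝ} (ha0 : 0 < a) (ha1 : a < 1) :
    StrictAntiOn (fun l => F l a) (Icc 0 a) := by
  apply strictAntiOn_of_deriv_neg (convex_Icc 0 a) (continuous_F_left a).continuousOn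
  intro x hx
  rw [interior_Icc] at hx
  obtain ⟨hx1, hx2⟩ := hx
  rw [(hasDerivAt_F_left hx1 (hx2.trans ha1)).deriv]
  have h1 : Real.log x < Real.log a := Real.log_lt_log hx1 hx2
  have h2 : Real.log (1 - a) < Real.log (1 - x) :=
    Real.log_lt_log (by linarith) (by linarith)
  linarith

lemma F_strictMonoOn {l : ℝ} (hl0 : 0 < l) (hl1 : l < 1) :
    StrictMonoOn (fun y => F l y) (Ico l 1) := by
  apply strictMonoOn_of_deriv_pos (convex_Ico l 1)
  · apply ContinuousOn.sub
    apply ContinuousOn.sub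
    · exact continuousOn_const
    · exact continuousOn_const.mul (Real.continuousOn_log.comp (continuousOn_id)
        (fun y hy => by
          simp only [Set.mem_compl_iff, Set.mem_singleton_iff, id]
          exact (hl0.trans_le hy.1).ne'))
    · exact continuousOn_const.mul ((Real.continuousOn_log.comp
        (continuousOn_const.sub continuousOn_id) (fun y hy => by
          simp only [Set.mem_compl_iff, Set.mem_singleton_iff]
          have : y < 1 := hy.2
          intro h; rw [sub_eq_zero] at h; linarith)))
  · intro y hy
    rw [interior_Ico] at hy
    obtain ⟨hy1, hy2⟩ := hy
    have hy0 : 0 < y := hl0.trans hy1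
    rw [(hasDerivAt_F_right hy0 hy2).deriv]
    rw [sub_pos, div_lt_div_iff₀ hy0 (by linarith)]
    nlinarith

section Lam

variable {α : ℝ} (hα : α ∈ Set.Ioo (0 : ℝ) 1) {Λ : ℝ → ℝ}
  (hΛ : ∀ a ∈ Set.Ioo (1 - α) 1, Λ a ∈ Set.Ico 0 a ∧ F (Λ a) a = -Real.log α)

include hα hΛ

lemma lam_mem {a : ℝ} (ha : a ∈ Set.Ioo (1 - α) 1) : Λ a ∈ Set.Ioo 0 a := by
  obtain ⟨h1, h2⟩ := hΛ a ha
  refine ⟨?_, h1.2⟩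
  rcases h1.1.lt_or_eq with h | h
  · exact h
  · exfalso
    have h0 : F 0 a = -Real.log (1 - a) := by simp [F]
    rw [← h] at h2
    rw [h0] at h2
    have : Real.log (1 - a) = Real.log α := by linarith
    have h1a : (0:ℝ) < 1 - a := by linarith [ha.2]
    have := Real.log_injOn_pos (Set.mem_Ioi.mpr h1a) (Set.mem_Ioi.mpr hα.1) this
    linarith [ha.1]

lemma lam_cont {a₀ : ℝ} (ha₀ : a₀ ∈ Set.Ioo (1 - α) 1) (ε : ℝ) (hε : 0 < ε) :
    ∀ᶠ a in nhds a₀, a ∈ Set.Ioo (1 - α) 1 ∧ |Λ a - Λ a₀| < ε := by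
  have ha₀0 : 0 < a₀ := lt_trans (by linarith [hα.2]) ha₀.1
  have ha₀1 : a₀ < 1 := ha₀.2
  set l₀ := Λ a₀ with hl₀
  have hm : l₀ ∈ Set.Ioo 0 a₀ := lam_mem hα hΛ ha₀
  have hEq : F l₀ a₀ = -Real.log α := (hΛ a₀ ha₀).2
  set ε' := min ε (min (l₀ / 2) ((a₀ - l₀) / 4)) with hε'def
  have hε' : 0 < ε' := lt_min hε (lt_min (by linarith [hm.1]) (by linarith [hm.2]))
  have hε'2 : ε' ≤ l₀ / 2 := le_trans (min_le_right _ _) (min_le_left _ _)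
  have hε'3 : ε' ≤ (a₀ - l₀) / 4 := le_trans (min_le_right _ _) (min_le_right _ _)
  set p := l₀ - ε' with hp
  set q := l₀ + ε' with hq
  have hpmem : p ∈ Set.Icc 0 a₀ := ⟨by linarith [hm.1], by linarith [hm.2]⟩
  have hqmem : q ∈ Set.Icc 0 a₀ := ⟨by linarith [hm.1], by linarith [hm.2]⟩
  have hlmem : l₀ ∈ Set.Icc 0 a₀ := ⟨hm.1.le, hm.2.le⟩
  have hFp : -Real.log α < F p a₀ := by
    have := F_strictAntiOn ha₀0 ha₀1 hpmem hlmem (by linarith)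
    simp only at this; rw [hEq] at this; exact this
  have hFq : F q a₀ < -Real.log α := by
    have := F_strictAntiOn ha₀0 ha₀1 hlmem hqmem (by linarith)
    simp only at this; rw [hEq] at this; exact this
  have c1 : ContinuousAt (fun a => F p a) a₀ := (hasDerivAt_F_right ha₀0 ha₀1).continuousAt
  have c2 : ContinuousAt (fun a => F q a) a₀ := (hasDerivAt_F_right ha₀0 ha₀1).continuousAt
  have h1 : ∀ᶠ a in nhds a₀, -Real.log α < F p a := c1.eventually_const_lt hFp
  have h2 : ∀ᶠ a in nhds a₀, F q a < -Real.log α := c2.eventually_lt_const hFq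
  have h3 : ∀ᶠ a in nhds a₀, a ∈ Set.Ioo (1 - α) 1 := isOpen_Ioo.eventually_mem ha₀
  have h4 : ∀ᶠ a in nhds a₀, q < a := eventually_gt_nhds (by linarith [hm.2])
  filter_upwards [h1, h2, h3, h4] with a hFpa hFqa haI hqa
  refine ⟨haI, ?_⟩
  have ha0 : 0 < a := lt_trans (by linarith [hα.2]) haI.1
  have hla := (hΛ a haI).1
  have hEqa : F (Λ a) a = -Real.log α := (hΛ a haI).2
  have hanti := F_strictAntiOn ha0 haI.2
  have hClaim1 : p < Λ a := by
    by_contra hcon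
    push_neg at hcon
    have hmemΛ : Λ a ∈ Set.Icc 0 a := ⟨hla.1, hla.2.le⟩
    have hmemp : p ∈ Set.Icc 0 a := ⟨hpmem.1, by linarith⟩
    have := hanti.antitoneOn hmemΛ hmemp hcon
    rw [hEqa] at this
    linarith
  have hClaim2 : Λ a < q := by
    by_contra hcon
    push_neg at hcon
    have hmemΛ : Λ a ∈ Set.Icc 0 a := ⟨hla.1, hla.2.le⟩
    have hmemq : q ∈ Set.Icc 0 a := ⟨hqmem.1, by linarith⟩
    have := hanti.antitoneOn hmemq hmemΛ hcon
    rw [hEqa] at this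
    linarith
  have : |Λ a - l₀| < ε' := abs_lt.mpr ⟨by simp [hp] at hClaim1; linarith, by
    simp [hq] at hClaim2; linarith⟩
  exact this.trans_le (min_le_left _ _)


set_option maxHeartbeats 1000000 in
lemma lam_hasDerivAt {a₀ : ℝ} (ha₀ : a₀ ∈ Set.Ioo (1 - α) 1) :
    HasDerivAt Λ
      (((1 - Λ a₀) / (1 - a₀) - Λ a₀ / a₀) /
        (Real.log a₀ - Real.log (1 - a₀) - Real.log (Λ a₀) + Real.log (1 - Λ a₀))) a₀ := by
  have ha₀0 : 0 < a₀ := lt_trans (by linarith [hα.2]) ha₀.1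
  have ha₀1 : a₀ < 1 := ha₀.2
  set l₀ := Λ a₀ with hl₀def
  have hm : l₀ ∈ Set.Ioo 0 a₀ := lam_mem hα hΛ ha₀
  have hEq : F l₀ a₀ = -Real.log α := (hΛ a₀ ha₀).2
  set G : ℝ × ℝ × ℝ → ℝ := fun p =>
    ((1 - l₀) / (1 - p.2.1) - l₀ / p.2.1) /
      (Real.log p.2.2 - Real.log (1 - p.2.2) - Real.log p.1 + Real.log (1 - p.1)) with hGdef
  have hDd : 0 < Real.log a₀ - Real.log (1 - a₀) - Real.log l₀ + Real.log (1 - l₀) := by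
    have h1 : Real.log l₀ < Real.log a₀ := Real.log_lt_log hm.1 hm.2
    have h2 : Real.log (1 - a₀) < Real.log (1 - l₀) :=
      Real.log_lt_log (by linarith) (by linarith [hm.2])
    linarith
  have cx : Continuous (fun p : ℝ × ℝ × ℝ => p.1) := continuous_fst
  have cy : Continuous (fun p : ℝ × ℝ × ℝ => p.2.1) := continuous_fst.comp continuous_snd
  have cb : Continuous (fun p : ℝ × ℝ × ℝ => p.2.2) := continuous_snd.comp continuous_snd
  have hGc : ContinuousAt G (l₀, a₀, a₀) := by
    apply ContinuousAt.div
    · apply ContinuousAt.sub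
      · exact continuousAt_const.div (continuousAt_const.sub cy.continuousAt)
          (by show (1:ℝ) - a₀ ≠ 0; linarith)
      · exact continuousAt_const.div cy.continuousAt (by show a₀ ≠ 0; linarith)
    · have h1 : ContinuousAt (fun p : ℝ × ℝ × ℝ => Real.log p.2.2) (l₀, a₀, a₀) :=
        (Real.continuousAt_log (by show a₀ ≠ 0; linarith)).comp cb.continuousAt
      have h2 : ContinuousAt (fun p : ℝ × ℝ × ℝ => Real.log (1 - p.2.2)) (l₀, a₀, a₀) :=
        (Real.continuousAt_log (by show (1:ℝ) - a₀ ≠ 0; linarith)).comp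
          (continuous_const.sub cb).continuousAt
      have h3 : ContinuousAt (fun p : ℝ × ℝ × ℝ => Real.log p.1) (l₀, a₀, a₀) :=
        (Real.continuousAt_log (by show l₀ ≠ 0; exact hm.1.ne')).comp cx.continuousAt
      have h4 : ContinuousAt (fun p : ℝ × ℝ × ℝ => Real.log (1 - p.1)) (l₀, a₀, a₀) :=
        (Real.continuousAt_log (by show (1:ℝ) - l₀ ≠ 0; have := hm.2; linarith)).comp
          (continuous_const.sub cx).continuousAt
      exact ((h1.sub h2).sub h3).add h4
    · exact hDd.ne'
  have hGpt : G (l₀, a₀, a₀) = ((1 - l₀) / (1 - a₀) - l₀ / a₀) /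
      (Real.log a₀ - Real.log (1 - a₀) - Real.log l₀ + Real.log (1 - l₀)) := rfl
  rw [show (((1 - l₀) / (1 - a₀) - l₀ / a₀) /
      (Real.log a₀ - Real.log (1 - a₀) - Real.log l₀ + Real.log (1 - l₀))) = G (l₀, a₀, a₀)
    from hGpt.symm]
  rw [hasDerivAt_iff_tendsto_slope, Metric.tendsto_nhds]
  intro ε hε
  obtain ⟨δ, hδ0, hδ⟩ := Metric.continuousAt_iff.mp hGc ε hε
  set ε₁ := min δ (min (l₀ / 2) ((a₀ - l₀) / 4)) with hε₁def
  have hε₁pos : 0 < ε₁ := lt_min hδ0 (lt_min (by linarith [hm.1]) (by linarith [hm.2]))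
  have hε₁δ : ε₁ ≤ δ := min_le_left _ _
  have hε₁2 : ε₁ ≤ l₀ / 2 := le_trans (min_le_right _ _) (min_le_left _ _)
  have hε₁3 : ε₁ ≤ (a₀ - l₀) / 4 := le_trans (min_le_right _ _) (min_le_right _ _)
  have hev1 := lam_cont hα hΛ ha₀ ε₁ hε₁pos
  have hev2 : ∀ᶠ b in nhds a₀, |b - a₀| < ε₁ := by
    filter_upwards [Metric.ball_mem_nhds a₀ hε₁pos] with b hb
    simpa [Real.dist_eq] using hb
  filter_upwards [hev1.filter_mono nhdsWithin_le_nhds, hev2.filter_mono nhdsWithin_le_nhds,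
    self_mem_nhdsWithin] with b hb1 hb2 hbne
  have hne : b ≠ a₀ := hbne
  obtain ⟨hbI, hbΛ⟩ := hb1
  have hb0 : 0 < b := lt_trans (by linarith [hα.2]) hbI.1
  have hb1' : b < 1 := hbI.2
  have hblow : l₀ + 3 * ε₁ < b := by
    have : a₀ - ε₁ < b := by have := abs_lt.mp hb2; linarith [this.1]
    linarith
  set lb := Λ b with hlbdef
  have hlbm : lb ∈ Set.Ioo 0 b := lam_mem hα hΛ hbI
  have hEqb : F lb b = -Real.log α := (hΛ b hbI).2
  have hlbd := abs_lt.mp hbΛ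
  have hbd := abs_lt.mp hb2
  -- lb ≠ l₀
  have hlbne : lb ≠ l₀ := by
    intro hcon
    have h1 : F l₀ b = F l₀ a₀ := by
      have h2 : F l₀ b = -Real.log α := by rw [hcon] at hEqb; exact hEqb
      rw [h2, hEq]
    have hmono := (F_strictMonoOn hm.1 (by linarith [hm.2] : l₀ < 1)).injOn
    have hbmem : b ∈ Set.Ico l₀ 1 := ⟨by linarith, hb1'⟩
    have hamem : a₀ ∈ Set.Ico l₀ 1 := ⟨hm.2.le, ha₀1⟩
    exact hne (hmono hbmem hamem h1)
  -- MVT in the first variable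
  have hMVT1 : ∃ ξ : ℝ, |ξ - l₀| < ε₁ ∧ 0 < ξ ∧ ξ < 1 ∧ ξ < b ∧
      (Real.log ξ - Real.log (1 - ξ) - Real.log b + Real.log (1 - b)) * (lb - l₀)
        = F lb b - F l₀ b := by
    rcases lt_or_gt_of_ne hlbne with hlt | hgt
    · obtain ⟨c, hc, hceq⟩ := exists_hasDerivAt_eq_slope (fun l => F l b)
        (fun l => Real.log l - Real.log (1 - l) - Real.log b + Real.log (1 - b)) hlt
        (continuous_F_left b).continuousOn
        (fun x hx => hasDerivAt_F_left (by linarith [hx.1, hlbd.1, hε₁2]) (by linarith [hx.2, hm.2]))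
      refine ⟨c, ?_, by linarith [hc.1, hlbd.1, hε₁2], by linarith [hc.2, hm.2], ?_, ?_⟩
      · rw [abs_lt]; constructor <;> [linarith [hc.1, hlbd.1]; linarith [hc.2, hε₁pos]]
      · linarith [hc.2, hblow, hε₁pos]
      · rw [hceq, div_mul_eq_mul_div, div_eq_iff (sub_ne_zero.mpr hlt.ne')]; ring
    · obtain ⟨c, hc, hceq⟩ := exists_hasDerivAt_eq_slope (fun l => F l b)
        (fun l => Real.log l - Real.log (1 - l) - Real.log b + Real.log (1 - b)) hgt
        (continuous_F_left b).continuousOn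
        (fun x hx => hasDerivAt_F_left (by linarith [hx.1, hm.1]) (by linarith [hx.2, hlbd.2, hm.2]))
      refine ⟨c, ?_, by linarith [hc.1, hm.1], by linarith [hc.2, hlbd.2, hm.2], ?_, ?_⟩
      · rw [abs_lt]; constructor <;> [linarith [hc.1, hε₁pos]; linarith [hc.2, hlbd.2]]
      · linarith [hc.2, hlbd.2, hblow]
      · rw [hceq, div_mul_eq_mul_div, div_eq_iff (sub_ne_zero.mpr hgt.ne')]
  -- MVT in the second variable
  have hMVT2 : ∃ η : ℝ, |η - a₀| < ε₁ ∧
      ((1 - l₀) / (1 - η) - l₀ / η) * (b - a₀) = F l₀ b - F l₀ a₀ := by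
    rcases lt_or_gt_of_ne hne with hlt | hgt
    · obtain ⟨c, hc, hceq⟩ := exists_hasDerivAt_eq_slope (fun y => F l₀ y)
        (fun y => (1 - l₀) / (1 - y) - l₀ / y) hlt
        (fun y hy => ((hasDerivAt_F_right (lt_of_lt_of_le hb0 hy.1)
          (lt_of_le_of_lt hy.2 ha₀1)).continuousAt).continuousWithinAt)
        (fun y hy => hasDerivAt_F_right (lt_trans hb0 hy.1) (lt_trans hy.2 ha₀1))
      refine ⟨c, ?_, ?_⟩
      · rw [abs_lt]; constructor <;> [linarith [hc.1, hbd.1]; linarith [hc.2, hε₁pos]]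
      · rw [hceq, div_mul_eq_mul_div, div_eq_iff (sub_ne_zero.mpr hlt.ne')]; ring
    · obtain ⟨c, hc, hceq⟩ := exists_hasDerivAt_eq_slope (fun y => F l₀ y)
        (fun y => (1 - l₀) / (1 - y) - l₀ / y) hgt
        (fun y hy => ((hasDerivAt_F_right (lt_of_lt_of_le ha₀0 hy.1)
          (lt_of_le_of_lt hy.2 hb1')).continuousAt).continuousWithinAt)
        (fun y hy => hasDerivAt_F_right (lt_trans ha₀0 hy.1) (lt_trans hy.2 hb1'))
      refine ⟨c, ?_, ?_⟩
      · rw [abs_lt]; constructor <;> [linarith [hc.1, hε₁pos]; linarith [hc.2, hbd.2]]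
      · rw [hceq, div_mul_eq_mul_div, div_eq_iff (sub_ne_zero.mpr hgt.ne')]
  obtain ⟨ξ, hξ1, hξ0, hξlt1, hξb, hξeq⟩ := hMVT1
  obtain ⟨η, hη1, hηeq⟩ := hMVT2
  have hDξ : Real.log ξ - Real.log (1 - ξ) - Real.log b + Real.log (1 - b) < 0 := by
    have h1 : Real.log ξ < Real.log b := Real.log_lt_log hξ0 hξb
    have h2 : Real.log (1 - b) < Real.log (1 - ξ) := Real.log_lt_log (by linarith) (by linarith)
    linarith
  have hslope : slope Λ a₀ b = G (ξ, η, b) := by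
    rw [slope_def_field]
    show (Λ b - Λ a₀) / (b - a₀) = ((1 - l₀) / (1 - η) - l₀ / η) /
      (Real.log b - Real.log (1 - b) - Real.log ξ + Real.log (1 - ξ))
    rw [← hlbdef, ← hl₀def]
    have hsum : (Real.log ξ - Real.log (1 - ξ) - Real.log b + Real.log (1 - b)) * (lb - l₀)
        + ((1 - l₀) / (1 - η) - l₀ / η) * (b - a₀) = 0 := by
      rw [hξeq, hηeq, hEqb, hEq]; ring
    have hbne' : b - a₀ ≠ 0 := sub_ne_zero.mpr hne
    have hDξ' : Real.log b - Real.log (1 - b) - Real.log ξ + Real.log (1 - ξ) ≠ 0 := by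
      intro h; apply hDξ.ne; linarith
    rw [div_eq_div_iff (sub_ne_zero.mpr hne) hDξ']
    linear_combination -hsum
  rw [hslope]
  apply hδ
  have h1 : dist ξ l₀ < δ := by rw [Real.dist_eq]; linarith [hξ1, hε₁δ]
  have h2 : dist η a₀ < δ := by rw [Real.dist_eq]; linarith [hη1, hε₁δ]
  have h3 : dist b a₀ < δ := by rw [Real.dist_eq]; linarith [hbd.1, hbd.2, hε₁δ, abs_lt.mpr hbd]
  calc dist ((ξ, η, b) : ℝ × ℝ × ℝ) (l₀, a₀, a₀)
      = max (dist ξ l₀) (max (dist η a₀) (dist b a₀)) := by rw [Prod.dist_eq, Prod.dist_eq]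
    _ < δ := by rw [max_lt_iff, max_lt_iff]; exact ⟨h1, h2, h3⟩

end Lam

lemma mul_log_nonpos' {x : ℝ} (h0 : 0 ≤ x) (h1 : x ≤ 1) : x * Real.log x ≤ 0 := by
  nlinarith [mul_nonneg h0 (neg_nonneg.mpr (Real.log_nonpos h0 h1))]

lemma sub_one_le_mul_log {x : ℝ} (h0 : 0 ≤ x) : x - 1 ≤ x * Real.log x := by
  rcases h0.eq_or_lt' with h | h
  · rw [h]; norm_num
  · nlinarith [Real.one_sub_inv_le_log_of_pos h, mul_pos h (inv_pos.mpr h),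
      mul_inv_cancel₀ h.ne']

lemma tendsto_one_sub : Filter.Tendsto (fun a : ℝ => 1 - a) (nhdsWithin 1 (Set.Iio 1))
    (nhdsWithin 0 (Set.Ioi 0)) := by
  apply tendsto_nhdsWithin_of_tendsto_nhds_of_eventually_within
  · have h : Tendsto (fun a : ℝ => 1 - a) (nhds 1) (nhds 0) := by
      have hc : Continuous (fun a : ℝ => 1 - a) := by continuity
      simpa using hc.tendsto 1
    exact h.mono_left nhdsWithin_le_nhds
  · filter_upwards [self_mem_nhdsWithin] with a ha
    simp only [Set.mem_Iio] at ha
    simp only [Set.mem_Ioi]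
    linarith

lemma tendsto_negLog : Filter.Tendsto (fun a : ℝ => -Real.log (1 - a))
    (nhdsWithin 1 (Set.Iio 1)) Filter.atTop := by
  have h1 : Tendsto (fun a : ℝ => Real.log (1 - a)) (nhdsWithin 1 (Set.Iio 1)) Filter.atBot :=
    Real.tendsto_log_nhdsGT_zero.comp tendsto_one_sub
  exact tendsto_neg_atBot_atTop.comp h1

lemma tendsto_mul_sq_log : Filter.Tendsto (fun a : ℝ => (1 - a) * (Real.log (1 - a))^2)
    (nhdsWithin 1 (Set.Iio 1)) (nhds 0) := by
  have hsq : Tendsto (fun x : ℝ => Real.log x * x ^ (1/2 : ℝ)) (nhdsWithin 0 (Set.Ioi 0))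
      (nhds 0) := tendsto_log_mul_rpow_nhdsGT_zero (by norm_num)
  have hsq2 : Tendsto (fun x : ℝ => x * (Real.log x)^2) (nhdsWithin 0 (Set.Ioi 0)) (nhds 0) := by
    have h2 := hsq.mul hsq
    rw [mul_zero] at h2
    apply h2.congr'
    filter_upwards [self_mem_nhdsWithin] with x hx
    have hx0 : (0:ℝ) < x := hx
    rw [show Real.log x * x ^ (1/2:ℝ) * (Real.log x * x ^ (1/2:ℝ))
      = (x ^ (1/2:ℝ) * x ^ (1/2:ℝ)) * (Real.log x)^2 by ring, ← Real.rpow_add hx0]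
    norm_num
  have := hsq2.comp tendsto_one_sub
  simpa [Function.comp_def] using this

set_option maxHeartbeats 2000000 in
/-- The derivative `Λ'(a)` of the implicit function `Λ` (where `Λ(a)` is the unique
`λ ∈ [0,a)` with `F(λ,a) = -log α`) tends to `+∞` as `a → 1⁻`. -/
theorem lambda_deriv_tendsto_atTop (α : ℝ) (hα : α ∈ Set.Ioo (0 : ℝ) 1)
    (Λ : ℝ → ℝ)
    (hΛ : ∀ a ∈ Set.Ioo (1 - α) 1, Λ a ∈ Set.Ico 0 a ∧ F (Λ a) a = -Real.log α) :
    Filter.Tendsto (deriv Λ) (nhdsWithin 1 (Set.Iio 1)) Filter.atTop := by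
  have hβ : 0 < -Real.log α := by
    have := Real.log_neg hα.1 hα.2
    linarith
  set β := -Real.log α with hβdef
  set K := β + 2 with hKdef
  set k := β / 2 with hkdef
  have hk0 : 0 < k := by positivity
  rw [Filter.tendsto_atTop]
  intro M
  set Mm := max M 0 with hMmdef
  have hMm0 : 0 ≤ Mm := le_max_right _ _
  have hMM : M ≤ Mm := le_max_left _ _
  set c3 := k / (2 * (Mm + 1)) with hc3def
  have hc3 : 0 < c3 := by positivity
  have E0 : ∀ᶠ a in nhdsWithin 1 (Set.Iio 1), a ∈ Set.Ioo (1 - α) 1 :=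
    Ioo_mem_nhdsLT (by linarith [hα.1])
  have E1 : ∀ᶠ a in nhdsWithin 1 (Set.Iio 1), (1/2 : ℝ) < a := by
    filter_upwards [Ioo_mem_nhdsLT (show (1/2:ℝ) < 1 by norm_num)] with a ha
    exact ha.1
  have E2 : ∀ᶠ a in nhdsWithin 1 (Set.Iio 1), -k < Real.log a := by
    have hc : ContinuousAt Real.log 1 := Real.continuousAt_log one_ne_zero
    have : ∀ᶠ a in nhds (1:ℝ), -k < Real.log a := by
      apply hc.eventually_const_lt
      rw [Real.log_one]; linarith
    exact this.filter_mono nhdsWithin_le_nhds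
  have E3 : ∀ᶠ a in nhdsWithin 1 (Set.Iio 1),
      max 1 (2 * K) ≤ -Real.log (1 - a) := tendsto_negLog.eventually_ge_atTop _
  have E5 : ∀ᶠ a in nhdsWithin 1 (Set.Iio 1),
      (1 - a) * (Real.log (1 - a))^2 < c3 := by
    exact tendsto_mul_sq_log.eventually_lt_const hc3
  filter_upwards [E0, E1, E2, E3, E5] with a hE0 hE1 hE2 hE3 hE5
  have hm := lam_mem hα hΛ hE0
  have hEqa : F (Λ a) a = -Real.log α := (hΛ a hE0).2
  rw [(lam_hasDerivAt hα hΛ hE0).deriv]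
  set l := Λ a with hldef
  have ha0 : (0:ℝ) < a := by linarith
  have ha1 : a < 1 := hE0.2
  have hu0 : (0:ℝ) < 1 - a := by linarith
  set L := -Real.log (1 - a) with hLdef
  have hL1 : (1:ℝ) ≤ L := le_trans (le_max_left _ _) hE3
  have hL2K : 2 * K ≤ L := le_trans (le_max_right _ _) hE3
  have hL0 : (0:ℝ) < L := by linarith
  have hl0 : 0 < l := hm.1
  have hl1 : l < 1 := lt_trans hm.2 ha1
  -- the basic identity
  have hExp : (1 - l) * L = β - l * Real.log l - (1 - l) * Real.log (1 - l)
      + l * Real.log a := by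
    have h := hEqa
    unfold F at h
    rw [hβdef, hLdef]
    linarith
  have hent1 : l * Real.log l ≤ 0 := mul_log_nonpos' hl0.le hl1.le
  have hent2 : (1 - l) * Real.log (1 - l) ≤ 0 := mul_log_nonpos' (by linarith) (by linarith)
  have hent3 : l - 1 ≤ l * Real.log l := sub_one_le_mul_log hl0.le
  have hent4 : (1 - l) - 1 ≤ (1 - l) * Real.log (1 - l) := sub_one_le_mul_log (by linarith)
  have hloga : Real.log a ≤ 0 := Real.log_nonpos ha0.le ha1.le
  have hent5 : l * Real.log a ≤ 0 := mul_nonpos_iff.mpr (Or.inl ⟨hl0.le, hloga⟩)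
  have hent6 : Real.log a ≤ l * Real.log a := by nlinarith
  have hupper : (1 - l) * L ≤ K := by linarith [hKdef]
  have hlower : k ≤ (1 - l) * L := by linarith [hE2, hkdef]
  have hlhalf : (1/2 : ℝ) ≤ l := by
    nlinarith [mul_nonneg (by linarith : (0:ℝ) ≤ 1 - l) (by linarith : (0:ℝ) ≤ L - 2*K)]
  -- denominator bounds
  have hD0 : 0 < Real.log a - Real.log (1 - a) - Real.log l + Real.log (1 - l) := by
    have h1 : Real.log l < Real.log a := Real.log_lt_log hl0 hm.2
    have h2 : Real.log (1 - a) < Real.log (1 - l) := Real.log_lt_log (by linarith) (by linarith [hm.2])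
    linarith
  have hlogl : -Real.log l ≤ 1 := by
    have h1 : Real.log (2⁻¹ : ℝ) ≤ Real.log l := Real.log_le_log (by norm_num) (by linarith)
    rw [Real.log_inv] at h1
    have h2 : Real.log 2 ≤ 1 := by
      have := Real.log_le_sub_one_of_pos (by norm_num : (0:ℝ) < 2); linarith
    linarith
  have hlog1l : Real.log (1 - l) ≤ 0 := Real.log_nonpos (by linarith) (by linarith)
  have hD2L : Real.log a - Real.log (1 - a) - Real.log l + Real.log (1 - l) ≤ 2 * L := by
    rw [hLdef] at *; linarith
  -- numerator bounds
  have hkL : k / L ≤ 1 - l := (div_le_iff₀ hL0).mpr hlower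
  have hN1 : k / (L * (1 - a)) ≤ (1 - l) / (1 - a) := by
    rw [← div_div]
    exact div_le_div_of_nonneg_right hkL hu0.le
  have hN2 : l / a ≤ 2 := by rw [div_le_iff₀ ha0]; linarith
  have hN : k / (L * (1 - a)) - 2 ≤ (1 - l) / (1 - a) - l / a := by linarith
  -- from E5
  have hLu0 : 0 < L * (1 - a) := by positivity
  have hE5' : 2 * (Mm + 1) * (L * (1 - a)) * L ≤ k := by
    have hsq : (Real.log (1 - a))^2 = L^2 := by rw [hLdef]; ring
    rw [hsq, hc3def] at hE5
    have h9 := (lt_div_iff₀ (by positivity : (0:ℝ) < 2 * (Mm + 1))).mp hE5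
    have h10 : 2 * (Mm + 1) * (L * (1 - a)) * L = (1 - a) * L ^ 2 * (2 * (Mm + 1)) := by ring
    rw [h10]; exact h9.le
  have hkLu : 2 * (Mm + 1) * L ≤ k / (L * (1 - a)) := by
    rw [le_div_iff₀ hLu0]
    calc 2 * (Mm + 1) * L * (L * (1 - a)) = 2 * (Mm + 1) * (L * (1 - a)) * L := by ring
      _ ≤ k := hE5'
  -- final assembly
  have hfin : Mm ≤ ((1 - l) / (1 - a) - l / a) /
      (Real.log a - Real.log (1 - a) - Real.log l + Real.log (1 - l)) := by
    rw [le_div_iff₀ hD0]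
    nlinarith [mul_nonneg hMm0 (by linarith : (0:ℝ) ≤ 2 * L -
      (Real.log a - Real.log (1 - a) - Real.log l + Real.log (1 - l)))]
  linarith
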